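/- Let (B, C, ▷, ◁) be a matched pair of Hopf algebras over a field k (as in the previous context). Then the tensor product coalgebra structure Δ(b ⊗ c) = (b₍₁₎ ⊗ c₍₁₎) ⊗ (b₍₂₎ ⊗ c₍₂₎), ε(b ⊗ c) = ε(b)ε(c) on B ⊗ C makes the double cross product B ⋈ C (with product (b ⊗ c)(b' ⊗ c') = b (c₍₁₎ ▷ b'₍₁₎) ⊗ (c₍₂₎ ◁ b'₍₂₎) c') into a bialgebra: Δ is an algebra homomorphism from B ⋈ C to (B ⋈ C) ⊗ (B ⋈ C), and ε is an algebra homomorphism. -/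

import Mathlib

open TensorProduct

variable (k B C : Type*) [CommRing k] [Ring B] [HopfAlgebra k B] [Ring C] [HopfAlgebra k C]

/-- A matched pair of (bi/Hopf) algebras `(B, C, ▷, ◁)`:
`lact : C ⊗ B →ₗ B` is a left action making `B` a left `C`-module coalgebra,
`ract : C ⊗ B →ₗ C` is a right action making `C` a right `B`-module coalgebra,
together with the compatibility conditions of Proposition 4.1. -/
structure MatchedPair (lact : C ⊗[k] B →ₗ[k] B) (ract : C ⊗[k] B →ₗ[k] C) : Prop where
  /-- `1 ▷ b = b` -/
  lact_one : ∀ b : B, lact ((1 : C) ⊗ₜ[k] b) = b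
  /-- `(c c') ▷ b = c ▷ (c' ▷ b)` -/
  lact_act : lact ∘ₗ TensorProduct.map (LinearMap.mul' k C) LinearMap.id
    = lact ∘ₗ (TensorProduct.map LinearMap.id lact) ∘ₗ (TensorProduct.assoc k C C B).toLinearMap
  /-- `Δ(c ▷ b) = (c₁ ▷ b₁) ⊗ (c₂ ▷ b₂)` -/
  lact_comul : Coalgebra.comul ∘ₗ lact
    = (TensorProduct.map lact lact) ∘ₗ (TensorProduct.tensorTensorTensorComm k C C B B).toLinearMap
        ∘ₗ TensorProduct.map Coalgebra.comul Coalgebra.comul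
  /-- `ε(c ▷ b) = ε(c) ε(b)` -/
  lact_counit : Coalgebra.counit ∘ₗ lact
    = (TensorProduct.lid k k).toLinearMap ∘ₗ TensorProduct.map Coalgebra.counit Coalgebra.counit
  /-- `c ▷ 1 = ε(c) 1` -/
  lact_triv : ∀ c : C, lact (c ⊗ₜ[k] (1 : B)) = (Coalgebra.counit (R := k) c) • (1 : B)
  /-- `c ◁ 1 = c` -/
  ract_one : ∀ c : C, ract (c ⊗ₜ[k] (1 : B)) = c
  /-- `(c ◁ b) ◁ b' = c ◁ (b b')` -/
  ract_act : ract ∘ₗ (TensorProduct.map ract LinearMap.id) ∘ₗ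
      (TensorProduct.assoc k C B B).symm.toLinearMap
    = ract ∘ₗ TensorProduct.map LinearMap.id (LinearMap.mul' k B)
  /-- `Δ(c ◁ b) = (c₁ ◁ b₁) ⊗ (c₂ ◁ b₂)` -/
  ract_comul : Coalgebra.comul ∘ₗ ract
    = (TensorProduct.map ract ract) ∘ₗ (TensorProduct.tensorTensorTensorComm k C C B B).toLinearMap
        ∘ₗ TensorProduct.map Coalgebra.comul Coalgebra.comul
  /-- `ε(c ◁ b) = ε(c) ε(b)` -/
  ract_counit : Coalgebra.counit ∘ₗ ract
    = (TensorProduct.lid k k).toLinearMap ∘ₗ TensorProduct.map Coalgebra.counit Coalgebra.counit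
  /-- `1 ◁ b = ε(b) 1` -/
  ract_triv : ∀ b : B, ract ((1 : C) ⊗ₜ[k] b) = (Coalgebra.counit (R := k) b) • (1 : C)
  /-- `c ▷ (b b') = (c₁ ▷ b₁)((c₂ ◁ b₂) ▷ b')` -/
  comp_left : lact ∘ₗ TensorProduct.map LinearMap.id (LinearMap.mul' k B)
    = (LinearMap.mul' k B) ∘ₗ
      (TensorProduct.map lact (lact ∘ₗ TensorProduct.map ract LinearMap.id)) ∘ₗ
      (TensorProduct.assoc k (C ⊗[k] B) (C ⊗[k] B) B).toLinearMap ∘ₗ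
      (TensorProduct.map (TensorProduct.tensorTensorTensorComm k C C B B).toLinearMap
        LinearMap.id) ∘ₗ
      (TensorProduct.assoc k (C ⊗[k] C) (B ⊗[k] B) B).symm.toLinearMap ∘ₗ
      (TensorProduct.map LinearMap.id (TensorProduct.map Coalgebra.comul LinearMap.id)) ∘ₗ
      (TensorProduct.map Coalgebra.comul LinearMap.id)
  /-- `(c c') ◁ b = (c ◁ (c'₁ ▷ b₁))(c'₂ ◁ b₂)` -/
  comp_right : ract ∘ₗ TensorProduct.map (LinearMap.mul' k C) LinearMap.id
    = (LinearMap.mul' k C) ∘ₗ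
      (TensorProduct.map ract LinearMap.id) ∘ₗ
      (TensorProduct.assoc k C B C).symm.toLinearMap ∘ₗ
      (TensorProduct.map LinearMap.id (TensorProduct.map lact ract)) ∘ₗ
      (TensorProduct.map LinearMap.id
        (TensorProduct.tensorTensorTensorComm k C C B B).toLinearMap) ∘ₗ
      (TensorProduct.assoc k C (C ⊗[k] C) (B ⊗[k] B)).toLinearMap ∘ₗ
      (TensorProduct.map (TensorProduct.map LinearMap.id Coalgebra.comul) LinearMap.id) ∘ₗ
      (TensorProduct.map LinearMap.id Coalgebra.comul)
  /-- `(c₁ ◁ b₁) ⊗ (c₂ ▷ b₂) = (c₂ ◁ b₂) ⊗ (c₁ ▷ b₁)` -/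
  comp_mid : (TensorProduct.map ract lact) ∘ₗ
      (TensorProduct.tensorTensorTensorComm k C C B B).toLinearMap ∘ₗ
      TensorProduct.map Coalgebra.comul Coalgebra.comul
    = (TensorProduct.map ract lact) ∘ₗ
      (TensorProduct.comm k (C ⊗[k] B) (C ⊗[k] B)).toLinearMap ∘ₗ
      (TensorProduct.tensorTensorTensorComm k C C B B).toLinearMap ∘ₗ
      TensorProduct.map Coalgebra.comul Coalgebra.comul

/-- The double cross product multiplication on `B ⊗ C`:
`(b ⊗ c) ⊗ (b' ⊗ c') ↦ b (c₁ ▷ b'₁) ⊗ (c₂ ◁ b'₂) c'`. -/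
noncomputable def dcpMul (lact : C ⊗[k] B →ₗ[k] B) (ract : C ⊗[k] B →ₗ[k] C) :
    (B ⊗[k] C) ⊗[k] (B ⊗[k] C) →ₗ[k] B ⊗[k] C :=
  (TensorProduct.map (LinearMap.mul' k B) (LinearMap.mul' k C)) ∘ₗ
  (TensorProduct.assoc k B B (C ⊗[k] C)).symm.toLinearMap ∘ₗ
  (TensorProduct.map LinearMap.id (TensorProduct.assoc k B C C).toLinearMap) ∘ₗ
  (TensorProduct.map LinearMap.id
    (TensorProduct.map (TensorProduct.map lact ract) LinearMap.id)) ∘ₗ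
  (TensorProduct.map LinearMap.id
    (TensorProduct.map (TensorProduct.tensorTensorTensorComm k C C B B).toLinearMap
      LinearMap.id)) ∘ₗ
  (TensorProduct.map LinearMap.id
    (TensorProduct.assoc k (C ⊗[k] C) (B ⊗[k] B) C).symm.toLinearMap) ∘ₗ
  (TensorProduct.assoc k B (C ⊗[k] C) ((B ⊗[k] B) ⊗[k] C)).toLinearMap ∘ₗ
  (TensorProduct.map (TensorProduct.map LinearMap.id Coalgebra.comul)
    (TensorProduct.map Coalgebra.comul LinearMap.id))

/- Statement 5: for a matched pair of Hopf algebras (B, C, ▷, ◁), the tensor product coalgebra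
structure on B ⊗ C makes the double cross product B ⋈ C a bialgebra: Δ and ε are algebra
homomorphisms. -/

/-- The tensor product comultiplication on `B ⊗ C`. -/
noncomputable def tensorComulBC : B ⊗[k] C →ₗ[k] (B ⊗[k] C) ⊗[k] (B ⊗[k] C) :=
  (TensorProduct.tensorTensorTensorComm k B B C C).toLinearMap ∘ₗ
  TensorProduct.map Coalgebra.comul Coalgebra.comul

/-- The tensor product counit on `B ⊗ C`. -/
noncomputable def tensorCounitBC : B ⊗[k] C →ₗ[k] k :=
  (TensorProduct.lid k k).toLinearMap ∘ₗ
  TensorProduct.map Coalgebra.counit Coalgebra.counit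


set_option synthInstance.maxHeartbeats 1000000
set_option maxHeartbeats 4000000

section Aux
open Coalgebra
variable {k B C}
variable {lact : C ⊗[k] B →ₗ[k] B} {ract : C ⊗[k] B →ₗ[k] C}

lemma counit_lact (h : MatchedPair k B C lact ract) (c : C) (b : B) :
    counit (R := k) (lact (c ⊗ₜ b)) = counit (R := k) c * counit (R := k) b := by
  simpa [smul_eq_mul] using LinearMap.congr_fun h.lact_counit (c ⊗ₜ b)

lemma counit_ract (h : MatchedPair k B C lact ract) (c : C) (b : B) :
    counit (R := k) (ract (c ⊗ₜ b)) = counit (R := k) c * counit (R := k) b := by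
  simpa [smul_eq_mul] using LinearMap.congr_fun h.ract_counit (c ⊗ₜ b)

lemma sum_counit_mul {A : Type*} [AddCommMonoid A] [Module k A] [Coalgebra k A]
    {a : A} {ι : Type*} (r : Repr k a ι) :
    ∑ i ∈ r.index, counit (R := k) (r.left i) * counit (R := k) (r.right i)
      = counit (R := k) a := by
  have h2 := congrArg (fun x => counit (R := k) ((TensorProduct.lid k A) x))
    (Coalgebra.sum_counit_tmul_eq (R := k) r)
  simpa only [map_sum, lid_tmul, map_smul, smul_eq_mul, one_mul] using h2

lemma comul_lact (h : MatchedPair k B C lact ract) (c : C) (b : B)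
    {ι κ : Type*} (rc : Repr k c ι) (rb : Repr k b κ) :
    comul (R := k) (lact (c ⊗ₜ b)) =
      ∑ i ∈ rc.index, ∑ j ∈ rb.index,
        lact (rc.left i ⊗ₜ rb.left j) ⊗ₜ[k] lact (rc.right i ⊗ₜ rb.right j) := by
  have h1 := LinearMap.congr_fun h.lact_comul (c ⊗ₜ b)
  rw [LinearMap.comp_apply] at h1
  rw [h1]
  simp only [LinearMap.comp_apply, map_tmul, LinearEquiv.coe_coe]
  rw [← rc.eq, ← rb.eq]
  simp [sum_tmul, tmul_sum, map_sum, tensorTensorTensorComm_tmul]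
  exact Finset.sum_comm ..

lemma comul_ract (h : MatchedPair k B C lact ract) (c : C) (b : B)
    {ι κ : Type*} (rc : Repr k c ι) (rb : Repr k b κ) :
    comul (R := k) (ract (c ⊗ₜ b)) =
      ∑ i ∈ rc.index, ∑ j ∈ rb.index,
        ract (rc.left i ⊗ₜ rb.left j) ⊗ₜ[k] ract (rc.right i ⊗ₜ rb.right j) := by
  have h1 := LinearMap.congr_fun h.ract_comul (c ⊗ₜ b)
  rw [LinearMap.comp_apply] at h1
  rw [h1]
  simp only [LinearMap.comp_apply, map_tmul, LinearEquiv.coe_coe]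
  rw [← rc.eq, ← rb.eq]
  simp [sum_tmul, tmul_sum, map_sum, tensorTensorTensorComm_tmul]
  exact Finset.sum_comm ..

lemma cm_sum (h : MatchedPair k B C lact ract) (c : C) (b : B)
    {ι κ : Type*} (rc : Repr k c ι) (rb : Repr k b κ) :
    ∑ i ∈ rc.index, ∑ j ∈ rb.index,
        ract (rc.left i ⊗ₜ rb.left j) ⊗ₜ[k] lact (rc.right i ⊗ₜ rb.right j)
    = ∑ i ∈ rc.index, ∑ j ∈ rb.index,
        ract (rc.right i ⊗ₜ rb.right j) ⊗ₜ[k] lact (rc.left i ⊗ₜ rb.left j) := by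
  have h1 := LinearMap.congr_fun h.comp_mid (c ⊗ₜ b)
  simp only [LinearMap.comp_apply, map_tmul, LinearEquiv.coe_coe] at h1
  rw [← rc.eq, ← rb.eq] at h1
  simp only [sum_tmul, tmul_sum, map_sum, tensorTensorTensorComm_tmul, map_tmul,
    LinearEquiv.coe_coe, comm_tmul] at h1
  exact (Finset.sum_comm ..).trans (h1.trans (Finset.sum_comm ..))

lemma dcpMul_tmul (b : B) (c : C) (b' : B) (c' : C) {ι κ : Type*} (rc : Repr k c ι) (rb' : Repr k b' κ) :
    dcpMul k B C lact ract ((b ⊗ₜ c) ⊗ₜ (b' ⊗ₜ c')) =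
      ∑ i ∈ rc.index, ∑ j ∈ rb'.index,
        (b * lact (rc.left i ⊗ₜ rb'.left j)) ⊗ₜ[k]
          (ract (rc.right i ⊗ₜ rb'.right j) * c') := by
  simp only [dcpMul, LinearMap.comp_apply, map_tmul, LinearMap.id_coe, id_eq,
    LinearEquiv.coe_coe]
  rw [← rc.eq, ← rb'.eq]
  simp [sum_tmul, tmul_sum, map_sum, assoc_tmul, assoc_symm_tmul,
    tensorTensorTensorComm_tmul, LinearMap.mul'_apply]
  exact Finset.sum_comm ..

lemma tensorComulBC_tmul (b : B) (c : C) {ι κ : Type*} (rb : Repr k b ι) (rc : Repr k c κ) :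
    tensorComulBC k B C (b ⊗ₜ c) =
      ∑ m ∈ rb.index, ∑ i ∈ rc.index,
        (rb.left m ⊗ₜ[k] rc.left i) ⊗ₜ[k] (rb.right m ⊗ₜ[k] rc.right i) := by
  simp only [tensorComulBC, LinearMap.comp_apply, map_tmul, LinearEquiv.coe_coe]
  rw [← rb.eq, ← rc.eq]
  simp [sum_tmul, tmul_sum, map_sum, tensorTensorTensorComm_tmul]
  exact Finset.sum_comm ..

lemma tensorCounitBC_tmul (b : B) (c : C) :
    tensorCounitBC k B C (b ⊗ₜ c) = counit (R := k) b * counit (R := k) c := by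
  simp [tensorCounitBC, smul_eq_mul]

lemma comul_lactR (h : MatchedPair k B C lact ract) (c : C) (b : B) :
    comul (R := k) (lact (c ⊗ₜ b)) =
      ∑ i ∈ (ℛ k c).index, ∑ j ∈ (ℛ k b).index,
        lact ((ℛ k c).left i ⊗ₜ (ℛ k b).left j) ⊗ₜ[k]
          lact ((ℛ k c).right i ⊗ₜ (ℛ k b).right j) :=
  comul_lact h c b _ _

lemma comul_ractR (h : MatchedPair k B C lact ract) (c : C) (b : B) :
    comul (R := k) (ract (c ⊗ₜ b)) =
      ∑ i ∈ (ℛ k c).index, ∑ j ∈ (ℛ k b).index,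
        ract ((ℛ k c).left i ⊗ₜ (ℛ k b).left j) ⊗ₜ[k]
          ract ((ℛ k c).right i ⊗ₜ (ℛ k b).right j) :=
  comul_ract h c b _ _

lemma dcpMul_tmulR (b : B) (c : C) (b' : B) (c' : C) :
    dcpMul k B C lact ract ((b ⊗ₜ c) ⊗ₜ (b' ⊗ₜ c')) =
      ∑ i ∈ (ℛ k c).index, ∑ j ∈ (ℛ k b').index,
        (b * lact ((ℛ k c).left i ⊗ₜ (ℛ k b').left j)) ⊗ₜ[k]
          (ract ((ℛ k c).right i ⊗ₜ (ℛ k b').right j) * c') :=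
  dcpMul_tmul b c b' c' _ _

lemma tensorComulBC_tmulR (b : B) (c : C) :
    tensorComulBC k B C (b ⊗ₜ c) =
      ∑ m ∈ (ℛ k b).index, ∑ i ∈ (ℛ k c).index,
        ((ℛ k b).left m ⊗ₜ[k] (ℛ k c).left i) ⊗ₜ[k] ((ℛ k b).right m ⊗ₜ[k] (ℛ k c).right i) :=
  tensorComulBC_tmul b c _ _

lemma comulR {A : Type*} [AddCommMonoid A] [Module k A] [Coalgebra k A] (a : A) :
    comul (R := k) a = ∑ i ∈ (ℛ k a).index, (ℛ k a).left i ⊗ₜ[k] (ℛ k a).right i :=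
  ((ℛ k a).eq).symm

lemma fourfoldR {A M : Type*} [AddCommMonoid A] [Module k A] [Coalgebra k A]
    [AddCommMonoid M] [Module k M] (a : A) (Φ : A ⊗[k] (A ⊗[k] (A ⊗[k] A)) →ₗ[k] M) :
    ∑ i ∈ (ℛ k a).index, ∑ p ∈ (ℛ k ((ℛ k a).left i)).index,
      ∑ q ∈ (ℛ k ((ℛ k a).right i)).index,
      Φ ((ℛ k ((ℛ k a).left i)).left p ⊗ₜ ((ℛ k ((ℛ k a).left i)).right p ⊗ₜ
          ((ℛ k ((ℛ k a).right i)).left q ⊗ₜ (ℛ k ((ℛ k a).right i)).right q)))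
  = ∑ i ∈ (ℛ k a).index, ∑ q ∈ (ℛ k ((ℛ k a).right i)).index,
      ∑ u ∈ (ℛ k ((ℛ k ((ℛ k a).right i)).left q)).index,
      Φ ((ℛ k a).left i ⊗ₜ ((ℛ k ((ℛ k ((ℛ k a).right i)).left q)).left u ⊗ₜ
          ((ℛ k ((ℛ k ((ℛ k a).right i)).left q)).right u ⊗ₜ (ℛ k ((ℛ k a).right i)).right q))) := by
  have base := Coalgebra.sum_tmul_tmul_eq (R := k) (ℛ k a)
    (fun i => ℛ k ((ℛ k a).left i)) (fun i => ℛ k ((ℛ k a).right i))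
  have h1 := congrArg
    (fun x => Φ ((LinearMap.lTensor A (LinearMap.lTensor A (comul (R := k)))) x)) base
  simp only [map_sum, LinearMap.lTensor_tmul, comulR, tmul_sum] at h1
  rw [h1]
  refine Finset.sum_congr rfl fun i _ => ?_
  have base2 := Coalgebra.sum_tmul_tmul_eq (R := k) (ℛ k ((ℛ k a).right i))
    (fun q => ℛ k ((ℛ k ((ℛ k a).right i)).left q))
    (fun q => ℛ k ((ℛ k ((ℛ k a).right i)).right q))
  have h2 := congrArg
    (fun x => Φ (((TensorProduct.mk k A (A ⊗[k] (A ⊗[k] A))) ((ℛ k a).left i)) x)) base2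
  simp only [map_sum, mk_apply] at h2
  exact h2.symm

lemma move_c_L (c : C) (b1 b2 β1 β2 β3 β4 : B) (γ1 γ2 : C) :
    ∑ i ∈ (ℛ k c).index, ∑ p ∈ (ℛ k ((ℛ k c).left i)).index,
      ∑ q ∈ (ℛ k ((ℛ k c).right i)).index,
      ((b1 * lact ((ℛ k ((ℛ k c).left i)).left p ⊗ₜ β1)) ⊗ₜ[k]
          (ract ((ℛ k ((ℛ k c).right i)).left q ⊗ₜ β3) * γ1)) ⊗ₜ[k]
        ((b2 * lact ((ℛ k ((ℛ k c).left i)).right p ⊗ₜ β2)) ⊗ₜ[k]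
          (ract ((ℛ k ((ℛ k c).right i)).right q ⊗ₜ β4) * γ2))
  = ∑ i ∈ (ℛ k c).index, ∑ q ∈ (ℛ k ((ℛ k c).right i)).index,
      ∑ u ∈ (ℛ k ((ℛ k ((ℛ k c).right i)).left q)).index,
      ((b1 * lact ((ℛ k c).left i ⊗ₜ β1)) ⊗ₜ[k]
          (ract ((ℛ k ((ℛ k ((ℛ k c).right i)).left q)).right u ⊗ₜ β3) * γ1)) ⊗ₜ[k]
        ((b2 * lact ((ℛ k ((ℛ k ((ℛ k c).right i)).left q)).left u ⊗ₜ β2)) ⊗ₜ[k]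
          (ract ((ℛ k ((ℛ k c).right i)).right q ⊗ₜ β4) * γ2)) := by
  have H := fourfoldR (k := k) c
    ((TensorProduct.map
        (TensorProduct.map
          (LinearMap.mulLeft k b1 ∘ₗ lact ∘ₗ (TensorProduct.mk k C B).flip β1)
          (LinearMap.mulRight k γ1 ∘ₗ ract ∘ₗ (TensorProduct.mk k C B).flip β3))
        (TensorProduct.map
          (LinearMap.mulLeft k b2 ∘ₗ lact ∘ₗ (TensorProduct.mk k C B).flip β2)
          (LinearMap.mulRight k γ2 ∘ₗ ract ∘ₗ (TensorProduct.mk k C B).flip β4))) ∘ₗ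
      (tensorTensorTensorComm k C C C C).toLinearMap ∘ₗ
      (TensorProduct.assoc k C C (C ⊗[k] C)).symm.toLinearMap)
  simp only [LinearMap.coe_comp, Function.comp_apply, LinearEquiv.coe_coe, TensorProduct.map_tmul, assoc_symm_tmul, tensorTensorTensorComm_tmul, TensorProduct.mk_apply, LinearMap.flip_apply, LinearMap.mulLeft_apply, LinearMap.mulRight_apply] at H
  exact H

lemma move_c_R (c : C) (b1 b2 β1 β2 β3 β4 : B) (γ1 γ2 : C) :
    ∑ i ∈ (ℛ k c).index, ∑ p ∈ (ℛ k ((ℛ k c).left i)).index,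
      ∑ q ∈ (ℛ k ((ℛ k c).right i)).index,
      ((b1 * lact ((ℛ k ((ℛ k c).left i)).left p ⊗ₜ β1)) ⊗ₜ[k]
          (ract ((ℛ k ((ℛ k c).left i)).right p ⊗ₜ β2) * γ1)) ⊗ₜ[k]
        ((b2 * lact ((ℛ k ((ℛ k c).right i)).left q ⊗ₜ β3)) ⊗ₜ[k]
          (ract ((ℛ k ((ℛ k c).right i)).right q ⊗ₜ β4) * γ2))
  = ∑ i ∈ (ℛ k c).index, ∑ q ∈ (ℛ k ((ℛ k c).right i)).index,
      ∑ u ∈ (ℛ k ((ℛ k ((ℛ k c).right i)).left q)).index,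
      ((b1 * lact ((ℛ k c).left i ⊗ₜ β1)) ⊗ₜ[k]
          (ract ((ℛ k ((ℛ k ((ℛ k c).right i)).left q)).left u ⊗ₜ β2) * γ1)) ⊗ₜ[k]
        ((b2 * lact ((ℛ k ((ℛ k ((ℛ k c).right i)).left q)).right u ⊗ₜ β3)) ⊗ₜ[k]
          (ract ((ℛ k ((ℛ k c).right i)).right q ⊗ₜ β4) * γ2)) := by
  have H := fourfoldR (k := k) c
    ((TensorProduct.map
        (TensorProduct.map
          (LinearMap.mulLeft k b1 ∘ₗ lact ∘ₗ (TensorProduct.mk k C B).flip β1)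
          (LinearMap.mulRight k γ1 ∘ₗ ract ∘ₗ (TensorProduct.mk k C B).flip β2))
        (TensorProduct.map
          (LinearMap.mulLeft k b2 ∘ₗ lact ∘ₗ (TensorProduct.mk k C B).flip β3)
          (LinearMap.mulRight k γ2 ∘ₗ ract ∘ₗ (TensorProduct.mk k C B).flip β4))) ∘ₗ
      (TensorProduct.assoc k C C (C ⊗[k] C)).symm.toLinearMap)
  simp only [LinearMap.coe_comp, Function.comp_apply, LinearEquiv.coe_coe, TensorProduct.map_tmul, assoc_symm_tmul, tensorTensorTensorComm_tmul, TensorProduct.mk_apply, LinearMap.flip_apply, LinearMap.mulLeft_apply, LinearMap.mulRight_apply] at H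
  exact H

lemma move_b_L (b' : B) (b1 b2 : B) (x1 x2 x3 x4 γ1 γ2 : C) :
    ∑ j ∈ (ℛ k b').index, ∑ p ∈ (ℛ k ((ℛ k b').left j)).index,
      ∑ q ∈ (ℛ k ((ℛ k b').right j)).index,
      ((b1 * lact (x1 ⊗ₜ (ℛ k ((ℛ k b').left j)).left p)) ⊗ₜ[k]
          (ract (x3 ⊗ₜ (ℛ k ((ℛ k b').right j)).left q) * γ1)) ⊗ₜ[k]
        ((b2 * lact (x2 ⊗ₜ (ℛ k ((ℛ k b').left j)).right p)) ⊗ₜ[k]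
          (ract (x4 ⊗ₜ (ℛ k ((ℛ k b').right j)).right q) * γ2))
  = ∑ j ∈ (ℛ k b').index, ∑ q ∈ (ℛ k ((ℛ k b').right j)).index,
      ∑ v ∈ (ℛ k ((ℛ k ((ℛ k b').right j)).left q)).index,
      ((b1 * lact (x1 ⊗ₜ (ℛ k b').left j)) ⊗ₜ[k]
          (ract (x3 ⊗ₜ (ℛ k ((ℛ k ((ℛ k b').right j)).left q)).right v) * γ1)) ⊗ₜ[k]
        ((b2 * lact (x2 ⊗ₜ (ℛ k ((ℛ k ((ℛ k b').right j)).left q)).left v)) ⊗ₜ[k]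
          (ract (x4 ⊗ₜ (ℛ k ((ℛ k b').right j)).right q) * γ2)) := by
  have H := fourfoldR (k := k) b'
    ((TensorProduct.map
        (TensorProduct.map
          (LinearMap.mulLeft k b1 ∘ₗ lact ∘ₗ TensorProduct.mk k C B x1)
          (LinearMap.mulRight k γ1 ∘ₗ ract ∘ₗ TensorProduct.mk k C B x3))
        (TensorProduct.map
          (LinearMap.mulLeft k b2 ∘ₗ lact ∘ₗ TensorProduct.mk k C B x2)
          (LinearMap.mulRight k γ2 ∘ₗ ract ∘ₗ TensorProduct.mk k C B x4))) ∘ₗ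
      (tensorTensorTensorComm k B B B B).toLinearMap ∘ₗ
      (TensorProduct.assoc k B B (B ⊗[k] B)).symm.toLinearMap)
  simp only [LinearMap.coe_comp, Function.comp_apply, LinearEquiv.coe_coe, TensorProduct.map_tmul, assoc_symm_tmul, tensorTensorTensorComm_tmul, TensorProduct.mk_apply, LinearMap.flip_apply, LinearMap.mulLeft_apply, LinearMap.mulRight_apply] at H
  exact H

lemma move_b_R (b' : B) (b1 b2 : B) (x1 x2 x3 x4 γ1 γ2 : C) :
    ∑ j ∈ (ℛ k b').index, ∑ p ∈ (ℛ k ((ℛ k b').left j)).index,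
      ∑ q ∈ (ℛ k ((ℛ k b').right j)).index,
      ((b1 * lact (x1 ⊗ₜ (ℛ k ((ℛ k b').left j)).left p)) ⊗ₜ[k]
          (ract (x2 ⊗ₜ (ℛ k ((ℛ k b').left j)).right p) * γ1)) ⊗ₜ[k]
        ((b2 * lact (x3 ⊗ₜ (ℛ k ((ℛ k b').right j)).left q)) ⊗ₜ[k]
          (ract (x4 ⊗ₜ (ℛ k ((ℛ k b').right j)).right q) * γ2))
  = ∑ j ∈ (ℛ k b').index, ∑ q ∈ (ℛ k ((ℛ k b').right j)).index,
      ∑ v ∈ (ℛ k ((ℛ k ((ℛ k b').right j)).left q)).index,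
      ((b1 * lact (x1 ⊗ₜ (ℛ k b').left j)) ⊗ₜ[k]
          (ract (x2 ⊗ₜ (ℛ k ((ℛ k ((ℛ k b').right j)).left q)).left v) * γ1)) ⊗ₜ[k]
        ((b2 * lact (x3 ⊗ₜ (ℛ k ((ℛ k ((ℛ k b').right j)).left q)).right v)) ⊗ₜ[k]
          (ract (x4 ⊗ₜ (ℛ k ((ℛ k b').right j)).right q) * γ2)) := by
  have H := fourfoldR (k := k) b'
    ((TensorProduct.map
        (TensorProduct.map
          (LinearMap.mulLeft k b1 ∘ₗ lact ∘ₗ TensorProduct.mk k C B x1)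
          (LinearMap.mulRight k γ1 ∘ₗ ract ∘ₗ TensorProduct.mk k C B x2))
        (TensorProduct.map
          (LinearMap.mulLeft k b2 ∘ₗ lact ∘ₗ TensorProduct.mk k C B x3)
          (LinearMap.mulRight k γ2 ∘ₗ ract ∘ₗ TensorProduct.mk k C B x4))) ∘ₗ
      (TensorProduct.assoc k B B (B ⊗[k] B)).symm.toLinearMap)
  simp only [LinearMap.coe_comp, Function.comp_apply, LinearEquiv.coe_coe, TensorProduct.map_tmul, assoc_symm_tmul, tensorTensorTensorComm_tmul, TensorProduct.mk_apply, LinearMap.flip_apply, LinearMap.mulLeft_apply, LinearMap.mulRight_apply] at H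
  exact H

lemma move_cm (h : MatchedPair k B C lact ract) (mc : C) (mb : B)
    (A0 b2 : B) (γ1 : C) (δ : C) :
    ∑ u ∈ (ℛ k mc).index, ∑ v ∈ (ℛ k mb).index,
      (A0 ⊗ₜ[k] (ract ((ℛ k mc).right u ⊗ₜ (ℛ k mb).right v) * γ1)) ⊗ₜ[k]
        ((b2 * lact ((ℛ k mc).left u ⊗ₜ (ℛ k mb).left v)) ⊗ₜ[k] δ)
  = ∑ u ∈ (ℛ k mc).index, ∑ v ∈ (ℛ k mb).index,
      (A0 ⊗ₜ[k] (ract ((ℛ k mc).left u ⊗ₜ (ℛ k mb).left v) * γ1)) ⊗ₜ[k]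
        ((b2 * lact ((ℛ k mc).right u ⊗ₜ (ℛ k mb).right v)) ⊗ₜ[k] δ) := by
  have HC := cm_sum h mc mb (ℛ k mc) (ℛ k mb)
  have H := congrArg
    (⇑(TensorProduct.map
        (TensorProduct.mk k B C A0 ∘ₗ LinearMap.mulRight k γ1)
        (((TensorProduct.mk k B C).flip δ) ∘ₗ LinearMap.mulLeft k b2))) HC
  simp only [map_sum, LinearMap.coe_comp, Function.comp_apply, LinearEquiv.coe_coe, TensorProduct.map_tmul, assoc_symm_tmul, tensorTensorTensorComm_tmul, TensorProduct.mk_apply, LinearMap.flip_apply, LinearMap.mulLeft_apply, LinearMap.mulRight_apply] at H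
  exact H.symm

end Aux

theorem dcp_bialgebra
    (lact : C ⊗[k] B →ₗ[k] B) (ract : C ⊗[k] B →ₗ[k] C)
    (h : MatchedPair k B C lact ract) :
    -- Δ is an algebra homomorphism B ⋈ C → (B ⋈ C) ⊗ (B ⋈ C)
    (tensorComulBC k B C ∘ₗ dcpMul k B C lact ract
      = (TensorProduct.map (dcpMul k B C lact ract) (dcpMul k B C lact ract)) ∘ₗ
        (TensorProduct.tensorTensorTensorComm k (B ⊗[k] C) (B ⊗[k] C)
          (B ⊗[k] C) (B ⊗[k] C)).toLinearMap ∘ₗ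
        TensorProduct.map (tensorComulBC k B C) (tensorComulBC k B C)) ∧
    (tensorComulBC k B C ((1 : B) ⊗ₜ[k] (1 : C))
      = ((1 : B) ⊗ₜ[k] (1 : C)) ⊗ₜ[k] ((1 : B) ⊗ₜ[k] (1 : C))) ∧
    -- ε is an algebra homomorphism
    (tensorCounitBC k B C ∘ₗ dcpMul k B C lact ract
      = (TensorProduct.lid k k).toLinearMap ∘ₗ
        TensorProduct.map (tensorCounitBC k B C) (tensorCounitBC k B C)) ∧
    (tensorCounitBC k B C ((1 : B) ⊗ₜ[k] (1 : C)) = 1) := by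
  open Coalgebra in
  refine ⟨?_, ?_, ?_, ?_⟩
  · ext b c b' c'
    simp only [TensorProduct.AlgebraTensorModule.curry_apply, TensorProduct.curry_apply,
      LinearMap.coe_restrictScalars, LinearMap.coe_comp, Function.comp_apply,
      LinearEquiv.coe_coe, TensorProduct.map_tmul]
    rw [dcpMul_tmulR, map_sum]
    simp only [map_sum]
    conv_lhs => simp only [tensorComulBC, LinearMap.coe_comp, Function.comp_apply,
      LinearEquiv.coe_coe, TensorProduct.map_tmul, Bialgebra.comul_mul,
      comul_lactR h, comul_ractR h, ← Coalgebra.Repr.eq (ℛ k b), ← Coalgebra.Repr.eq (ℛ k c'),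
      Finset.sum_mul, Finset.mul_sum, Algebra.TensorProduct.tmul_mul_tmul,
      sum_tmul, tmul_sum, map_sum, tensorTensorTensorComm_tmul]
    conv_rhs => simp only [tensorComulBC_tmulR, sum_tmul, tmul_sum, map_sum,
      tensorTensorTensorComm_tmul, TensorProduct.map_tmul, dcpMul_tmulR,
      Finset.sum_mul, Finset.mul_sum]
    -- LHS: reorder (i,j,n,q,q',p,p',m) -> (j,n,q',p',m,i,p,q)
    conv_lhs => enter [2, y1, 2, y2, 2, y3]; rw [Finset.sum_comm]
    conv_lhs => enter [2, y1, 2, y2, 2, y3, 2, y4]; rw [Finset.sum_comm]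
    conv_lhs => enter [2, y1, 2, y2, 2, y3, 2, y4, 2, y5]; rw [Finset.sum_comm]
    conv_lhs => enter [2, y1, 2, y2, 2, y3, 2, y4, 2, y5, 2, y6]; rw [Finset.sum_comm]
    conv_lhs => enter [2, y1, 2, y2, 2, y3, 2, y4]; rw [Finset.sum_comm]
    conv_lhs => enter [2, y1, 2, y2, 2, y3, 2, y4, 2, y5]; rw [Finset.sum_comm]
    conv_lhs => rw [Finset.sum_comm]
    conv_lhs => enter [2, y1]; rw [Finset.sum_comm]
    conv_lhs => enter [2, y1, 2, y2]; rw [Finset.sum_comm]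
    conv_lhs => enter [2, y1, 2, y2, 2, y3]; rw [Finset.sum_comm]
    conv_lhs => enter [2, y1, 2, y2, 2, y3, 2, y4]; rw [Finset.sum_comm]
    simp only [move_c_L]
    -- reorder (j,n,q',p',m,i,q,u) -> (m,n,i,q,u,j,p',q')
    conv_lhs => enter [2, y1, 2, y2, 2, y3]; rw [Finset.sum_comm]
    conv_lhs => enter [2, y1, 2, y2]; rw [Finset.sum_comm]
    conv_lhs => enter [2, y1]; rw [Finset.sum_comm]
    conv_lhs => rw [Finset.sum_comm]
    conv_lhs => enter [2, y1]; rw [Finset.sum_comm]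
    conv_lhs => enter [2, y1, 2, y2, 2, y3, 2, y4]; rw [Finset.sum_comm]
    conv_lhs => enter [2, y1, 2, y2, 2, y3]; rw [Finset.sum_comm]
    conv_lhs => enter [2, y1, 2, y2]; rw [Finset.sum_comm]
    conv_lhs => enter [2, y1, 2, y2, 2, y3, 2, y4, 2, y5]; rw [Finset.sum_comm]
    conv_lhs => enter [2, y1, 2, y2, 2, y3, 2, y4]; rw [Finset.sum_comm]
    conv_lhs => enter [2, y1, 2, y2, 2, y3]; rw [Finset.sum_comm]
    conv_lhs => enter [2, y1, 2, y2, 2, y3, 2, y4, 2, y5, 2, y6]; rw [Finset.sum_comm]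
    conv_lhs => enter [2, y1, 2, y2, 2, y3, 2, y4, 2, y5]; rw [Finset.sum_comm]
    conv_lhs => enter [2, y1, 2, y2, 2, y3, 2, y4]; rw [Finset.sum_comm]
    conv_lhs => enter [2, y1, 2, y2, 2, y3, 2, y4, 2, y5, 2, y6]; rw [Finset.sum_comm]
    simp only [move_b_L]
    -- reorder (m,n,i,q,u,j,q',v) -> (m,n,i,q,j,q',u,v)
    conv_lhs => enter [2, y1, 2, y2, 2, y3, 2, y4]; rw [Finset.sum_comm]
    conv_lhs => enter [2, y1, 2, y2, 2, y3, 2, y4, 2, y5]; rw [Finset.sum_comm]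
    simp only [move_cm h]
    symm
    -- RHS: reorder (j,n,m,i,q,q',p,p') -> (j,n,m,q',p',i,p,q)
    conv_lhs => enter [2, y1, 2, y2, 2, y3, 2, y4]; rw [Finset.sum_comm]
    conv_lhs => enter [2, y1, 2, y2, 2, y3, 2, y4, 2, y5]; rw [Finset.sum_comm]
    conv_lhs => enter [2, y1, 2, y2, 2, y3, 2, y4, 2, y5, 2, y6]; rw [Finset.sum_comm]
    conv_lhs => enter [2, y1, 2, y2, 2, y3, 2, y4, 2, y5]; rw [Finset.sum_comm]
    conv_lhs => enter [2, y1, 2, y2, 2, y3]; rw [Finset.sum_comm]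
    conv_lhs => enter [2, y1, 2, y2, 2, y3, 2, y4]; rw [Finset.sum_comm]
    simp only [move_c_R]
    -- reorder (j,n,m,q',p',i,q,u) -> (m,n,i,q,u,j,p',q')
    conv_lhs => enter [2, y1]; rw [Finset.sum_comm]
    conv_lhs => rw [Finset.sum_comm]
    conv_lhs => enter [2, y1]; rw [Finset.sum_comm]
    conv_lhs => enter [2, y1, 2, y2, 2, y3, 2, y4]; rw [Finset.sum_comm]
    conv_lhs => enter [2, y1, 2, y2, 2, y3]; rw [Finset.sum_comm]
    conv_lhs => enter [2, y1, 2, y2]; rw [Finset.sum_comm]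
    conv_lhs => enter [2, y1, 2, y2, 2, y3, 2, y4, 2, y5]; rw [Finset.sum_comm]
    conv_lhs => enter [2, y1, 2, y2, 2, y3, 2, y4]; rw [Finset.sum_comm]
    conv_lhs => enter [2, y1, 2, y2, 2, y3]; rw [Finset.sum_comm]
    conv_lhs => enter [2, y1, 2, y2, 2, y3, 2, y4, 2, y5, 2, y6]; rw [Finset.sum_comm]
    conv_lhs => enter [2, y1, 2, y2, 2, y3, 2, y4, 2, y5]; rw [Finset.sum_comm]
    conv_lhs => enter [2, y1, 2, y2, 2, y3, 2, y4]; rw [Finset.sum_comm]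
    conv_lhs => enter [2, y1, 2, y2, 2, y3, 2, y4, 2, y5, 2, y6]; rw [Finset.sum_comm]
    simp only [move_b_R]
    -- reorder (m,n,i,q,u,j,q',v) -> (m,n,i,q,j,q',u,v)
    conv_lhs => enter [2, y1, 2, y2, 2, y3, 2, y4]; rw [Finset.sum_comm]
    conv_lhs => enter [2, y1, 2, y2, 2, y3, 2, y4, 2, y5]; rw [Finset.sum_comm]
  · simp [tensorComulBC, Algebra.TensorProduct.one_def, tensorTensorTensorComm_tmul]
  · ext b c b' c'
    simp only [TensorProduct.AlgebraTensorModule.curry_apply, TensorProduct.curry_apply,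
      LinearMap.coe_restrictScalars, LinearMap.coe_comp, Function.comp_apply,
      LinearEquiv.coe_coe, TensorProduct.map_tmul]
    rw [dcpMul_tmulR, map_sum]
    simp only [map_sum]
    simp only [map_sum, tensorCounitBC_tmul, Bialgebra.counit_mul, counit_lact h,
      counit_ract h, lid_tmul, smul_eq_mul]
    rw [← sum_counit_mul (ℛ k c), ← sum_counit_mul (ℛ k b')]
    simp only [Finset.mul_sum, Finset.sum_mul]
    rw [Finset.sum_comm]
    exact Finset.sum_congr rfl fun i _ => Finset.sum_congr rfl fun j _ => by ring
  · simp [tensorCounitBC]
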